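/- For x > 0, ε > 0, t > 0, the series Σ_{k≥1} erfc((x + (2k−1)ε)/√(2t)) converges, and it is bounded above by (√(2t)/(2ε√π))·e^{−x²/(2t)} + 1. -/

import Mathlib

open MeasureTheory Set Filter

lemma myIntExp : Integrable fun u : ℝ => Real.exp (-u ^ 2) := by
  have := integrable_exp_neg_mul_sq (b := 1) one_pos
  simpa using this

lemma myIntMulExp : Integrable fun u : ℝ => u * Real.exp (-u ^ 2) := by
  have := integrable_mul_exp_neg_mul_sq (b := 1) one_pos
  simpa using this

/-- Tail of the Gaussian with weight `u`. -/
lemma myGaussTail (a : ℝ) :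
    ∫ u in Set.Ioi a, u * Real.exp (-u ^ 2) = Real.exp (-a ^ 2) / 2 := by
  have hderiv : ∀ u ∈ Set.Ici a,
      HasDerivAt (fun v : ℝ => -Real.exp (-v ^ 2) / 2) (u * Real.exp (-u ^ 2)) u := by
    intro u _
    have h1 : HasDerivAt (fun v : ℝ => -v ^ 2) (-(2 * u)) u := by
      exact ((hasDerivAt_pow 2 u).neg).congr_deriv (by norm_num)
    have h2 := (h1.exp).neg.div_const 2
    refine h2.congr_deriv ?_
    ring
  have hlim : Tendsto (fun v : ℝ => -Real.exp (-v ^ 2) / 2) atTop (nhds 0) := by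
    have h1 : Tendsto (fun v : ℝ => -v ^ 2) atTop atBot :=
      tendsto_neg_atTop_atBot.comp (tendsto_pow_atTop two_ne_zero)
    have h2 := (Real.tendsto_exp_atBot.comp h1).neg.div_const 2
    simpa using h2
  have := integral_Ioi_of_hasDerivAt_of_tendsto' hderiv myIntMulExp.integrableOn hlim
  rw [this]
  ring

lemma mySplit {a b : ℝ} (hab : a ≤ b) (f : ℝ → ℝ) (hf : Integrable f) :
    ∫ u in Set.Ioi a, f u = (∫ u in Set.Ioc a b, f u) + ∫ u in Set.Ioi b, f u := by
  rw [← setIntegral_union Set.Ioc_disjoint_Ioi_same measurableSet_Ioi hf.integrableOn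
    hf.integrableOn, Set.Ioc_union_Ioi_eq_Ioi hab]

lemma myGTail_nonneg (a : ℝ) : 0 ≤ ∫ u in Set.Ioi a, Real.exp (-u ^ 2) :=
  setIntegral_nonneg measurableSet_Ioi fun u _ => (Real.exp_pos _).le

lemma myGTail_le_bound {a : ℝ} (ha : 0 < a) :
    (∫ u in Set.Ioi a, Real.exp (-u ^ 2)) ≤ Real.exp (-a ^ 2) / (2 * a) := by
  have h1 : (∫ u in Set.Ioi a, Real.exp (-u ^ 2)) ≤
      ∫ u in Set.Ioi a, a⁻¹ * (u * Real.exp (-u ^ 2)) := by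
    apply setIntegral_mono_on myIntExp.integrableOn
      ((myIntMulExp.const_mul a⁻¹).integrableOn) measurableSet_Ioi
    intro u hu
    have hu' : a ≤ u := (le_of_lt hu)
    have h2 : (1 : ℝ) ≤ a⁻¹ * u := by
      rw [inv_mul_eq_div, le_div_iff₀ ha]
      simpa using hu'
    nlinarith [Real.exp_pos (-u ^ 2), Real.exp_le_one_iff.2 (neg_nonpos.2 (sq_nonneg u))]
  rw [integral_const_mul, myGaussTail] at h1
  calc (∫ u in Set.Ioi a, Real.exp (-u ^ 2)) ≤ a⁻¹ * (Real.exp (-a ^ 2) / 2) := h1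
    _ = Real.exp (-a ^ 2) / (2 * a) := by field_simp

lemma myGTail_zero : (∫ u in Set.Ioi (0 : ℝ), Real.exp (-u ^ 2)) = Real.sqrt Real.pi / 2 := by
  have := integral_gaussian_Ioi 1
  simpa using this

/-- The complementary error function `erfc x = (2/√π) ∫_x^∞ e^{-u²} du`. -/
noncomputable def erfc (x : ℝ) : ℝ :=
  (2 / Real.sqrt Real.pi) * ∫ u in Set.Ioi x, Real.exp (-u ^ 2)

/-- For `x, ε, t > 0`, the series `Σ_{k≥1} erfc((x + (2k-1)ε)/√(2t))` converges and is
bounded by `(√(2t)/(2ε√π)) e^{-x²/(2t)} + 1`. -/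
theorem brownian_barsThrough_series (x ε t : ℝ) (hx : 0 < x) (hε : 0 < ε) (ht : 0 < t) :
    Summable (fun k : ℕ => erfc ((x + (2 * ((k : ℝ) + 1) - 1) * ε) / Real.sqrt (2 * t))) ∧
    ∑' k : ℕ, erfc ((x + (2 * ((k : ℝ) + 1) - 1) * ε) / Real.sqrt (2 * t)) ≤
      Real.sqrt (2 * t) / (2 * ε * Real.sqrt Real.pi) * Real.exp (-x ^ 2 / (2 * t)) + 1 := by
  have hπ : 0 < Real.sqrt Real.pi := Real.sqrt_pos.2 Real.pi_pos
  set c := Real.sqrt (2 * t) with hcdef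
  have hc : 0 < c := Real.sqrt_pos.2 (by linarith)
  have hc2 : c ^ 2 = 2 * t := Real.sq_sqrt (by linarith)
  set a : ℕ → ℝ := fun k => (x + (2 * (k : ℝ) + 1) * ε) / c with hadef
  set g : ℝ → ℝ := fun y => ∫ u in Set.Ioi y, Real.exp (-u ^ 2) with hgdef
  clear_value c a g
  have hgeq : ∀ y : ℝ, g y = ∫ u in Set.Ioi y, Real.exp (-u ^ 2) := by
    intro y; rw [hgdef]
  have hgnn : ∀ y : ℝ, 0 ≤ g y := by
    intro y; rw [hgeq]; exact myGTail_nonneg y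
  have harg : ∀ k : ℕ, (x + (2 * ((k : ℝ) + 1) - 1) * ε) / c = a k := by
    intro k; rw [hadef]; ring_nf
  have ha_pos : ∀ k : ℕ, 0 < a k := by
    intro k
    rw [hadef]
    apply div_pos _ hc
    have : (0:ℝ) ≤ (k : ℝ) := Nat.cast_nonneg k
    nlinarith
  have ha_mono : ∀ k : ℕ, a k ≤ a (k + 1) := by
    intro k
    rw [hadef]
    exact (div_le_div_iff_of_pos_right hc).2 (by push_cast; nlinarith)
  have hca : ∀ k : ℕ, c * a k = x + (2 * (k : ℝ) + 1) * ε := by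
    intro k; rw [hadef]; field_simp [hc.ne']
  -- key pointwise fact: for m ≤ (c/(2ε)) u on [a m, ∞)
  have hstep : ∀ m : ℕ, (m : ℝ) * (g (a m) - g (a (m + 1))) ≤
      c / (4 * ε) * (Real.exp (-(a m) ^ 2) - Real.exp (-(a (m + 1)) ^ 2)) := by
    intro m
    have hsplit1 : g (a m) = (∫ u in Set.Ioc (a m) (a (m+1)), Real.exp (-u ^ 2)) + g (a (m+1)) := by
      rw [hgeq, hgeq]; exact mySplit (ha_mono m) _ myIntExp
    have hsplit2 : (∫ u in Set.Ioc (a m) (a (m+1)), u * Real.exp (-u ^ 2)) =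
        Real.exp (-(a m) ^ 2) / 2 - Real.exp (-(a (m+1)) ^ 2) / 2 := by
      have h1 := mySplit (ha_mono m) _ myIntMulExp
      rw [myGaussTail, myGaussTail] at h1
      linarith
    have hmono : (∫ u in Set.Ioc (a m) (a (m+1)), (m : ℝ) * Real.exp (-u ^ 2)) ≤
        ∫ u in Set.Ioc (a m) (a (m+1)), c / (2 * ε) * (u * Real.exp (-u ^ 2)) := by
      apply setIntegral_mono_on ((myIntExp.const_mul _).integrableOn)
        ((myIntMulExp.const_mul _).integrableOn) measurableSet_Ioc
      intro u hu
      have hu1 : a m ≤ u := le_of_lt hu.1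
      have hcu : x + (2 * (m : ℝ) + 1) * ε ≤ c * u := by
        rw [← hca m]; nlinarith
      have hmu : (m : ℝ) ≤ c / (2 * ε) * u := by
        rw [div_mul_eq_mul_div, le_div_iff₀ (by linarith : (0:ℝ) < 2 * ε)]
        nlinarith
      have he : (0:ℝ) < Real.exp (-u ^ 2) := Real.exp_pos _
      calc (m : ℝ) * Real.exp (-u ^ 2) ≤ (c / (2 * ε) * u) * Real.exp (-u ^ 2) := by nlinarith
        _ = c / (2 * ε) * (u * Real.exp (-u ^ 2)) := by ring
    rw [integral_const_mul, integral_const_mul, hsplit2] at hmono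
    have : g (a m) - g (a (m+1)) = ∫ u in Set.Ioc (a m) (a (m+1)), Real.exp (-u ^ 2) := by
      linarith
    rw [this]
    calc (m : ℝ) * ∫ u in Set.Ioc (a m) (a (m+1)), Real.exp (-u ^ 2)
        ≤ c / (2 * ε) * (Real.exp (-(a m) ^ 2) / 2 - Real.exp (-(a (m+1)) ^ 2) / 2) := hmono
      _ = c / (4 * ε) * (Real.exp (-(a m) ^ 2) - Real.exp (-(a (m + 1)) ^ 2)) := by
          have hco : ∀ p q : ℝ, c / (2 * ε) * (p / 2 - q / 2) = c / (4 * ε) * (p - q) := by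
            intro p q
            rw [div_mul_eq_mul_div, div_mul_eq_mul_div,
              div_eq_div_iff (by positivity : (2 * ε : ℝ) ≠ 0) (by positivity : (4 * ε : ℝ) ≠ 0)]
            ring
          exact hco _ _
  -- the induction
  have key : ∀ m : ℕ, (∑ k ∈ Finset.range m, g (a (k + 1))) ≤
      c / (4 * ε) * (Real.exp (-(a 0) ^ 2) - Real.exp (-(a m) ^ 2)) + m * g (a m) := by
    intro m
    induction m with
    | zero => simp
    | succ m ih =>
        rw [Finset.sum_range_succ]
        have h := hstep m
        push_cast
        nlinarith [h, ih]
  -- last term bound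
  have hlast : ∀ m : ℕ, (m : ℝ) * g (a m) ≤ c / (4 * ε) * Real.exp (-(a m) ^ 2) := by
    intro m
    have h1 : g (a m) ≤ Real.exp (-(a m) ^ 2) / (2 * a m) := by
      rw [hgeq]; exact myGTail_le_bound (ha_pos m)
    have h2 : (m : ℝ) * (2 * a m) ≤ c / (2 * ε) * (2 * (a m) ^ 2) := by
      have : (m : ℝ) ≤ c / (2 * ε) * a m := by
        rw [div_mul_eq_mul_div, le_div_iff₀ (by linarith : (0:ℝ) < 2 * ε), hca m]
        nlinarith
      nlinarith [ha_pos m]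
    have hg0 : 0 ≤ g (a m) := hgnn _
    have he : (0:ℝ) < Real.exp (-(a m) ^ 2) := Real.exp_pos _
    have ham := ha_pos m
    have h3 : (m : ℝ) * g (a m) ≤ (m : ℝ) * (Real.exp (-(a m) ^ 2) / (2 * a m)) := by
      apply mul_le_mul_of_nonneg_left h1 (Nat.cast_nonneg m)
    calc (m : ℝ) * g (a m) ≤ (m : ℝ) * (Real.exp (-(a m) ^ 2) / (2 * a m)) := h3
      _ ≤ c / (4 * ε) * Real.exp (-(a m) ^ 2) := by
          have key2 : (m : ℝ) * (2 * ε) ≤ c * a m := by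
            rw [hca m]; nlinarith
          have hrw : (m : ℝ) * (Real.exp (-(a m) ^ 2) / (2 * a m)) =
              ((m : ℝ) * Real.exp (-(a m) ^ 2)) / (2 * a m) := by ring
          rw [hrw, div_le_iff₀ (by linarith : (0:ℝ) < 2 * a m), div_mul_eq_mul_div,
            div_mul_eq_mul_div, le_div_iff₀ (by linarith : (0:ℝ) < 4 * ε)]
          nlinarith [mul_le_mul_of_nonneg_right key2 he.le]
  have hE0 : Real.exp (-(a 0) ^ 2) ≤ Real.exp (-x ^ 2 / (2 * t)) := by
    apply Real.exp_le_exp.2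
    have h1 : x / c ≤ a 0 := by
      rw [hadef]
      exact (div_le_div_iff_of_pos_right hc).2 (by nlinarith)
    have h2 : (x / c) ^ 2 ≤ (a 0) ^ 2 := by
      apply pow_le_pow_left₀ (by positivity) h1
    have h4 : -x ^ 2 / (2 * t) = -((x / c) ^ 2) := by
      rw [div_pow, hc2]; ring
    rw [h4]
    exact neg_le_neg h2
  have hg00 : g (a 0) ≤ Real.sqrt Real.pi / 2 := by
    have hsp : g 0 = (∫ u in Set.Ioc (0:ℝ) (a 0), Real.exp (-u ^ 2)) + g (a 0) := by
      rw [hgeq, hgeq]; exact mySplit (le_of_lt (ha_pos 0)) _ myIntExp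
    have hnn : 0 ≤ ∫ u in Set.Ioc (0:ℝ) (a 0), Real.exp (-u ^ 2) :=
      setIntegral_nonneg measurableSet_Ioc fun u _ => (Real.exp_pos _).le
    have hz : g 0 = Real.sqrt Real.pi / 2 := by rw [hgeq]; exact myGTail_zero
    linarith
  set B := c / (2 * ε * Real.sqrt Real.pi) * Real.exp (-x ^ 2 / (2 * t)) + 1
    with hBdef
  have hterm : ∀ k : ℕ, erfc ((x + (2 * ((k : ℝ) + 1) - 1) * ε) / c) =
      2 / Real.sqrt Real.pi * g (a k) := by
    intro k; rw [harg k, erfc, hgeq]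
  have hnn : ∀ k : ℕ, 0 ≤ erfc ((x + (2 * ((k : ℝ) + 1) - 1) * ε) / c) := by
    intro k; rw [hterm k]; exact mul_nonneg (by positivity) (hgnn _)
  have hbound : ∀ n : ℕ, (∑ k ∈ Finset.range n,
      erfc ((x + (2 * ((k : ℝ) + 1) - 1) * ε) / c)) ≤ B := by
    intro n
    match n with
    | 0 => simp [hBdef]; positivity
    | Nat.succ m =>
        rw [Finset.sum_range_succ']
        simp only [hterm]
        rw [← Finset.mul_sum]
        have h1 : (∑ k ∈ Finset.range m, g (a (k + 1))) ≤
            c / (4 * ε) * Real.exp (-(a 0) ^ 2) := by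
          have := key m
          have := hlast m
          linarith
        have h2 : 2 / Real.sqrt Real.pi * (∑ k ∈ Finset.range m, g (a (k + 1))) ≤
            2 / Real.sqrt Real.pi * (c / (4 * ε) * Real.exp (-(a 0) ^ 2)) :=
          mul_le_mul_of_nonneg_left h1 (by positivity)
        have h3 : 2 / Real.sqrt Real.pi * (c / (4 * ε) * Real.exp (-(a 0) ^ 2)) ≤
            c / (2 * ε * Real.sqrt Real.pi) * Real.exp (-x ^ 2 / (2 * t)) := by
          have hcoef : 2 / Real.sqrt Real.pi * (c / (4 * ε)) = c / (2 * ε * Real.sqrt Real.pi) := by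
            field_simp; ring
          calc 2 / Real.sqrt Real.pi * (c / (4 * ε) * Real.exp (-(a 0) ^ 2))
              = c / (2 * ε * Real.sqrt Real.pi) * Real.exp (-(a 0) ^ 2) := by
                rw [← mul_assoc, hcoef]
            _ ≤ c / (2 * ε * Real.sqrt Real.pi) * Real.exp (-x ^ 2 / (2 * t)) :=
                mul_le_mul_of_nonneg_left hE0 (by positivity)
        have h4 : 2 / Real.sqrt Real.pi * g (a 0) ≤ 1 := by
          have := mul_le_mul_of_nonneg_left hg00 (by positivity : (0:ℝ) ≤ 2 / Real.sqrt Real.pi)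
          calc 2 / Real.sqrt Real.pi * g (a 0)
              ≤ 2 / Real.sqrt Real.pi * (Real.sqrt Real.pi / 2) := this
            _ = 1 := by field_simp
        rw [hBdef]
        linarith
  refine ⟨summable_of_sum_range_le hnn hbound, Real.tsum_le_of_sum_range_le hnn hbound⟩
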